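/- Let h : ℝ → ℝ satisfy h(0) = 0 and suppose G(x,y) = h(x+y) − h(x) − h(y) defines a continuous function on ℝ². Let p, n be positive integers with gcd(p,n) = 1 and p/n ∈ (0, 1/2). Then |h(p/n)| ≤ 2p·|h(1)|/n + 2·ω(G; p/n; [0,1]²). -/

import Mathlib

/-- Modulus of continuity of `F : ℝ² → ℝ` on `Ω` with increment `δ`
(Euclidean distance on `ℝ²`). -/
noncomputable def omega2 (F : ℝ × ℝ → ℝ) (δ : ℝ) (Ω : Set (ℝ × ℝ)) : ℝ :=
  sSup {d : ℝ | ∃ p ∈ Ω, ∃ q ∈ Ω,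
    Real.sqrt ((p.1 - q.1) ^ 2 + (p.2 - q.2) ^ 2) ≤ δ ∧ d = |F p - F q|}

/-- Let `h(0) = 0` and `G(x,y) = h(x+y) - h(x) - h(y)` be continuous on `ℝ²`.
For coprime positive integers `p, n` with `p/n ∈ (0, 1/2)`:
`|h(p/n)| ≤ 2p|h(1)|/n + 2·ω(G; p/n; [0,1]²)`. -/
theorem stmt_6 (h : ℝ → ℝ) (h0 : h 0 = 0)
    (hG : Continuous (fun q : ℝ × ℝ => h (q.1 + q.2) - h q.1 - h q.2))
    (p n : ℕ) (hp : 0 < p) (hn : 0 < n) (hgcd : Nat.gcd p n = 1)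
    (hlt : (p : ℝ) / n < 1 / 2) :
    |h ((p : ℝ) / n)| ≤ 2 * (p : ℝ) * |h 1| / (n : ℝ)
      + 2 * omega2 (fun q : ℝ × ℝ => h (q.1 + q.2) - h q.1 - h q.2) ((p : ℝ) / n)
          (Set.Icc (0 : ℝ) 1 ×ˢ Set.Icc (0 : ℝ) 1) := by
  set G : ℝ × ℝ → ℝ := fun q : ℝ × ℝ => h (q.1 + q.2) - h q.1 - h q.2 with hGdef
  set Ω : Set (ℝ × ℝ) := Set.Icc (0 : ℝ) 1 ×ˢ Set.Icc (0 : ℝ) 1 with hΩ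
  set δ : ℝ := (p : ℝ) / n with hδ
  set ω : ℝ := omega2 G δ Ω with hω
  have hn0 : (0:ℝ) < n := by exact_mod_cast hn
  have hp0 : (0:ℝ) < p := by exact_mod_cast hp
  have hδ0 : 0 < δ := div_pos hp0 hn0
  have hpn : (p:ℝ) ≤ n := by
    have := (div_lt_iff₀ hn0).1 hlt
    linarith
  -- boundedness of the set defining omega2
  obtain ⟨M, hM⟩ := (isCompact_Icc.prod isCompact_Icc).exists_bound_of_continuousOn
    (hG.continuousOn (s := Ω))
  have bdd : BddAbove {d : ℝ | ∃ a ∈ Ω, ∃ b ∈ Ω,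
      Real.sqrt ((a.1 - b.1) ^ 2 + (a.2 - b.2) ^ 2) ≤ δ ∧ d = |G a - G b|} := by
    refine ⟨2 * M, ?_⟩
    rintro d ⟨a, ha, b, hb, -, rfl⟩
    have h1 := hM a ha
    have h2 := hM b hb
    simp only [Real.norm_eq_abs] at h1 h2
    calc |G a - G b| ≤ |G a| + |G b| := abs_sub _ _
      _ ≤ 2 * M := by linarith
  have key : ∀ a ∈ Ω, ∀ b ∈ Ω,
      Real.sqrt ((a.1 - b.1) ^ 2 + (a.2 - b.2) ^ 2) ≤ δ → |G a - G b| ≤ ω := by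
    intro a ha b hb hd
    exact le_csSup bdd ⟨a, ha, b, hb, hd, rfl⟩
  have mem00 : ((0:ℝ), (0:ℝ)) ∈ Ω := by
    constructor <;> exact ⟨le_refl _, zero_le_one⟩
  have hω0 : 0 ≤ ω := by
    have := key _ mem00 _ mem00 (by simp; positivity)
    simpa using this
  have hmemj : ∀ j : ℕ, (j:ℝ) ≤ n → ((j:ℝ)/n) ∈ Set.Icc (0:ℝ) 1 := by
    intro j hj
    constructor
    · positivity
    · rw [div_le_one hn0]; exact hj
  have hδmem : δ ∈ Set.Icc (0:ℝ) 1 := by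
    constructor
    · exact le_of_lt hδ0
    · rw [hδ, div_le_one hn0]; linarith
  have hone : (1:ℝ) ∈ Set.Icc (0:ℝ) 1 := ⟨zero_le_one, le_refl _⟩
  -- bound on the G(j/n, δ) terms
  have bnd1 : ∀ j ∈ Finset.range n, |G ((j:ℝ)/n, δ)| ≤ ω := by
    intro j hj
    rw [Finset.mem_range] at hj
    have hjn : (j:ℝ) ≤ n := by exact_mod_cast hj.le
    have hmem : ((j:ℝ)/n, δ) ∈ Ω := ⟨hmemj j hjn, hδmem⟩
    have hmem' : ((j:ℝ)/n, (0:ℝ)) ∈ Ω := ⟨hmemj j hjn, ⟨le_refl _, zero_le_one⟩⟩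
    have hz : G ((j:ℝ)/n, (0:ℝ)) = 0 := by simp [hGdef, h0]
    have := key _ hmem _ hmem' (by
      simp only
      rw [show ((j:ℝ)/n - (j:ℝ)/n)^2 + (δ - 0)^2 = δ^2 by ring,
        Real.sqrt_sq hδ0.le])
    rwa [hz, sub_zero] at this
  -- bound on the G(j/n, 1) terms
  have bnd2 : ∀ j ∈ Finset.range p, |G ((j:ℝ)/n, 1)| ≤ ω := by
    intro j hj
    rw [Finset.mem_range] at hj
    have hjp : (j:ℝ) ≤ p := by exact_mod_cast hj.le
    have hjn : (j:ℝ) ≤ n := le_trans hjp hpn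
    have hmem : ((j:ℝ)/n, (1:ℝ)) ∈ Ω := ⟨hmemj j hjn, hone⟩
    have hmem' : ((0:ℝ), (1:ℝ)) ∈ Ω := ⟨⟨le_refl _, zero_le_one⟩, hone⟩
    have hz : G ((0:ℝ), (1:ℝ)) = 0 := by simp [hGdef, h0]
    have := key _ hmem _ hmem' (by
      simp only
      rw [show ((j:ℝ)/n - 0)^2 + ((1:ℝ) - 1)^2 = ((j:ℝ)/n)^2 by ring,
        Real.sqrt_sq (by positivity), hδ]
      gcongr)
    rwa [hz, sub_zero] at this
  -- the key identity
  have hid : (n:ℝ) * h δ = (p:ℝ) * h 1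
      + (∑ j ∈ Finset.range p, G ((j:ℝ)/n, 1))
      - (∑ j ∈ Finset.range n, G ((j:ℝ)/n, δ)) := by
    have e1 : ∀ j : ℕ, G ((j:ℝ)/n, 1) = h (((j+n:ℕ):ℝ)/n) - h ((j:ℝ)/n) - h 1 := by
      intro j
      have e : (j:ℝ)/n + 1 = ((j+n:ℕ):ℝ)/n := by
        push_cast
        rw [show (1:ℝ) = (n:ℝ)/n from (div_self hn0.ne').symm, ← add_div]
      simp only [hGdef, e]
    have e2 : ∀ j : ℕ, G ((j:ℝ)/n, δ) = h (((j+p:ℕ):ℝ)/n) - h ((j:ℝ)/n) - h δ := by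
      intro j
      have e : (j:ℝ)/n + δ = ((j+p:ℕ):ℝ)/n := by
        rw [hδ]
        push_cast
        rw [← add_div]
      simp only [hGdef, e]
    simp only [e1, e2, Finset.sum_sub_distrib, Finset.sum_const, Finset.card_range,
      nsmul_eq_mul]
    set f : ℕ → ℝ := fun j => h ((j:ℝ)/n) with hf
    have A : ∑ j ∈ Finset.range n, f j + ∑ j ∈ Finset.range p, f (n + j)
        = ∑ j ∈ Finset.range (n + p), f j := (Finset.sum_range_add f n p).symm
    have B : ∑ j ∈ Finset.range p, f j + ∑ j ∈ Finset.range n, f (p + j)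
        = ∑ j ∈ Finset.range (p + n), f j := (Finset.sum_range_add f p n).symm
    have hc : ∑ j ∈ Finset.range (n + p), f j = ∑ j ∈ Finset.range (p + n), f j := by
      rw [Nat.add_comm]
    have A' : ∑ j ∈ Finset.range p, (fun j => h (((j+n:ℕ):ℝ)/n)) j
        = ∑ j ∈ Finset.range p, f (n + j) := by
      apply Finset.sum_congr rfl
      intro j _
      simp only [hf, Nat.add_comm j n]
    have B' : ∑ j ∈ Finset.range n, (fun j => h (((j+p:ℕ):ℝ)/n)) j
        = ∑ j ∈ Finset.range n, f (p + j) := by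
      apply Finset.sum_congr rfl
      intro j _
      simp only [hf, Nat.add_comm j p]
    simp only [hf] at A B A' B' ⊢
    rw [A', B'] at *
    linarith
  -- combine
  have s1 : |∑ j ∈ Finset.range p, G ((j:ℝ)/n, 1)| ≤ (p:ℝ) * ω := by
    calc |∑ j ∈ Finset.range p, G ((j:ℝ)/n, 1)|
        ≤ ∑ j ∈ Finset.range p, |G ((j:ℝ)/n, 1)| := Finset.abs_sum_le_sum_abs _ _
      _ ≤ ∑ _j ∈ Finset.range p, ω := Finset.sum_le_sum bnd2
      _ = (p:ℝ) * ω := by rw [Finset.sum_const, Finset.card_range, nsmul_eq_mul]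
  have s2 : |∑ j ∈ Finset.range n, G ((j:ℝ)/n, δ)| ≤ (n:ℝ) * ω := by
    calc |∑ j ∈ Finset.range n, G ((j:ℝ)/n, δ)|
        ≤ ∑ j ∈ Finset.range n, |G ((j:ℝ)/n, δ)| := Finset.abs_sum_le_sum_abs _ _
      _ ≤ ∑ _j ∈ Finset.range n, ω := Finset.sum_le_sum bnd1
      _ = (n:ℝ) * ω := by rw [Finset.sum_const, Finset.card_range, nsmul_eq_mul]
  have main : (n:ℝ) * |h δ| ≤ (p:ℝ) * |h 1| + (p:ℝ) * ω + (n:ℝ) * ω := by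
    have : (n:ℝ) * |h δ| = |(n:ℝ) * h δ| := by
      rw [abs_mul, abs_of_pos hn0]
    rw [this, hid]
    have t1 : |(p:ℝ) * h 1| = (p:ℝ) * |h 1| := by rw [abs_mul, abs_of_pos hp0]
    calc |(p:ℝ) * h 1 + (∑ j ∈ Finset.range p, G ((j:ℝ)/n, 1))
          - (∑ j ∈ Finset.range n, G ((j:ℝ)/n, δ))|
        ≤ |(p:ℝ) * h 1| + |∑ j ∈ Finset.range p, G ((j:ℝ)/n, 1)|
          + |∑ j ∈ Finset.range n, G ((j:ℝ)/n, δ)| := by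
          exact (abs_sub _ _).trans (by gcongr; exact abs_add_le _ _)
      _ ≤ (p:ℝ) * |h 1| + (p:ℝ) * ω + (n:ℝ) * ω := by rw [t1]; gcongr
  have habs : 0 ≤ |h 1| := abs_nonneg _
  have hrw : (2:ℝ) * (p:ℝ) * |h 1| / (n:ℝ) + 2 * ω
      = (2 * (p:ℝ) * |h 1| + 2 * (n:ℝ) * ω) / n := by
    field_simp
  rw [hrw, le_div_iff₀ hn0]
  nlinarith [main]
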